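/- A Banach space X is HLUR if and only if X is strongly locally U-convex and satisfies the property (HS). -/
import Mathlib


open Metric Filter Topology NormedSpace

noncomputable section

/-- The face `S(X, f, 0) = {y ∈ B_X : f(y) = 1}` determined by a functional `f`. -/
def face (X : Type*) [NormedAddCommGroup X] [NormedSpace ℝ X] (f : X →L[ℝ] ℝ) : Set X :=
  {y | ‖y‖ ≤ 1 ∧ f y = 1}

/-- Property (HS). -/
def HSProp (X : Type*) [NormedAddCommGroup X] [NormedSpace ℝ X] : Prop :=
  ∀ f : X →L[ℝ] ℝ, ‖f‖ = 1 → (face X f).Nonempty →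
    ∀ xs : ℕ → X, (∀ n, ‖xs n‖ ≤ 1) →
      Tendsto (fun n => f (xs n)) atTop (𝓝 1) →
      Tendsto (fun n => infDist (xs n) (face X f)) atTop (𝓝 0)

/-- Property (HLUR). -/
def HLUR (X : Type*) [NormedAddCommGroup X] [NormedSpace ℝ X] : Prop :=
  ∀ x : X, ‖x‖ = 1 → ∀ xs : ℕ → X, (∀ n, ‖xs n‖ = 1) →
    Tendsto (fun n => ‖xs n + x‖) atTop (𝓝 2) →
    ∀ f : X →L[ℝ] ℝ, ‖f‖ = 1 → f x = 1 →
      Tendsto (fun n => infDist (xs n) (face X f)) atTop (𝓝 0)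

/-- Local uniform rotundity. -/
def LUR (X : Type*) [NormedAddCommGroup X] [NormedSpace ℝ X] : Prop :=
  ∀ x : X, ‖x‖ = 1 → ∀ xs : ℕ → X, (∀ n, ‖xs n‖ = 1) →
    Tendsto (fun n => ‖xs n + x‖) atTop (𝓝 2) → Tendsto xs atTop (𝓝 x)

/-- Compact local uniform rotundity. -/
def CLUR (X : Type*) [NormedAddCommGroup X] [NormedSpace ℝ X] : Prop :=
  ∀ x : X, ‖x‖ = 1 → ∀ xs : ℕ → X, (∀ n, ‖xs n‖ = 1) →
    Tendsto (fun n => ‖xs n + x‖) atTop (𝓝 2) →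
    ∃ φ : ℕ → ℕ, StrictMono φ ∧ ∃ z : X, Tendsto (xs ∘ φ) atTop (𝓝 z)

/-- Local U-convexity. -/
def LocallyUConvex (X : Type*) [NormedAddCommGroup X] [NormedSpace ℝ X] : Prop :=
  ∀ x : X, ‖x‖ = 1 → ∀ xs : ℕ → X, (∀ n, ‖xs n‖ = 1) →
    Tendsto (fun n => ‖xs n + x‖) atTop (𝓝 2) →
    ∃ f : X →L[ℝ] ℝ, ‖f‖ = 1 ∧ f x = 1 ∧ Tendsto (fun n => f (xs n)) atTop (𝓝 1)

/-- Strong local U-convexity. -/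
def StronglyLocallyUConvex (X : Type*) [NormedAddCommGroup X] [NormedSpace ℝ X] : Prop :=
  ∀ x : X, ‖x‖ = 1 → ∀ xs : ℕ → X, (∀ n, ‖xs n‖ = 1) →
    Tendsto (fun n => ‖xs n + x‖) atTop (𝓝 2) →
    ∀ f : X →L[ℝ] ℝ, ‖f‖ = 1 → f x = 1 → Tendsto (fun n => f (xs n)) atTop (𝓝 1)

/-- Rotundity (strict convexity): every face has at most one element. -/
def Rotund (X : Type*) [NormedAddCommGroup X] [NormedSpace ℝ X] : Prop :=
  ∀ f : X →L[ℝ] ℝ, ‖f‖ = 1 → (face X f).Subsingleton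

/-- Near strict convexity: every face is norm-compact. -/
def NSC (X : Type*) [NormedAddCommGroup X] [NormedSpace ℝ X] : Prop :=
  ∀ f : X →L[ℝ] ℝ, ‖f‖ = 1 → IsCompact (face X f)

/-- Kadets-Klee property. -/
def KadetsKlee (X : Type*) [NormedAddCommGroup X] [NormedSpace ℝ X] : Prop :=
  ∀ (xs : ℕ → X) (x : X),
    (∀ f : X →L[ℝ] ℝ, Tendsto (fun n => f (xs n)) atTop (𝓝 (f x))) →
    Tendsto (fun n => ‖xs n‖) atTop (𝓝 ‖x‖) → Tendsto xs atTop (𝓝 x)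

/-- Alternatively convex or smooth. -/
def ACS (X : Type*) [NormedAddCommGroup X] [NormedSpace ℝ X] : Prop :=
  ∀ x y : X, ‖x‖ = 1 → ‖y‖ = 1 → ∀ f : X →L[ℝ] ℝ, ‖f‖ = 1 →
    ‖x + y‖ = 2 → f x = 1 → f y = 1

/-- Smoothness: each unit vector has a unique norming functional. -/
def SmoothSpace (X : Type*) [NormedAddCommGroup X] [NormedSpace ℝ X] : Prop :=
  ∀ x : X, ‖x‖ = 1 → ∃! f : X →L[ℝ] ℝ, ‖f‖ = 1 ∧ f x = 1

/-- Reflexivity of a normed space. -/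
def ReflexiveSpace (X : Type*) [NormedAddCommGroup X] [NormedSpace ℝ X] : Prop :=
  Function.Surjective (inclusionInDoubleDual ℝ X)

/-- Strong rotundity: reflexive, rotund and Kadets-Klee. -/
def StronglyRotund (X : Type*) [NormedAddCommGroup X] [NormedSpace ℝ X] : Prop :=
  ReflexiveSpace X ∧ Rotund X ∧ KadetsKlee X

lemma face_bound {X : Type*} [NormedAddCommGroup X] [NormedSpace ℝ X]
    {f : X →L[ℝ] ℝ} (hf : ‖f‖ = 1) {z : X} (hne : (face X f).Nonempty) :
    |f z - 1| ≤ infDist z (face X f) := by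
  by_contra h
  push_neg at h
  obtain ⟨y, hy, hdy⟩ := (Metric.infDist_lt_iff hne).mp h
  have : |f z - 1| = |f (z - y)| := by rw [map_sub, hy.2]
  have hb : |f (z - y)| ≤ ‖z - y‖ := by
    calc |f (z - y)| = ‖f (z - y)‖ := rfl
    _ ≤ ‖f‖ * ‖z - y‖ := f.le_opNorm _
    _ = ‖z - y‖ := by rw [hf, one_mul]
  rw [this] at hdy
  exact absurd hdy (not_lt.mpr (hb.trans_eq (dist_eq_norm z y).symm)).elim

lemma norm_one_of_mem_face {X : Type*} [NormedAddCommGroup X] [NormedSpace ℝ X]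
    {f : X →L[ℝ] ℝ} (hf : ‖f‖ = 1) {x : X} (hx : x ∈ face X f) : ‖x‖ = 1 := by
  refine le_antisymm hx.1 ?_
  have : (1 : ℝ) = f x := hx.2.symm
  calc (1 : ℝ) = f x := hx.2.symm
  _ ≤ |f x| := le_abs_self _
  _ ≤ ‖f‖ * ‖x‖ := f.le_opNorm _
  _ = ‖x‖ := by rw [hf, one_mul]

theorem hlur_iff_sluc_hs (X : Type*) [NormedAddCommGroup X] [NormedSpace ℝ X]
    [CompleteSpace X] :
    HLUR X ↔ StronglyLocallyUConvex X ∧ HSProp X := by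
  constructor
  · intro H
    constructor
    · -- HLUR → SLUC
      intro x hx xs hxs hsum f hf hfx
      have hne : (face X f).Nonempty := ⟨x, le_of_eq hx, hfx⟩
      have hd := H x hx xs hxs hsum f hf hfx
      have h0 : Tendsto (fun n => f (xs n) - 1) atTop (𝓝 0) := by
        apply squeeze_zero_norm (fun n => face_bound hf hne) hd
      have := h0.add (tendsto_const_nhds (x := (1:ℝ)))
      simpa using this
    · -- HLUR → HS
      intro f hf hne xs hxs hfx
      classical
      obtain ⟨x, hx⟩ := hne
      have hxn : ‖x‖ = 1 := norm_one_of_mem_face hf hx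
      have hfle : ∀ n, f (xs n) ≤ ‖xs n‖ := fun n => by
        calc f (xs n) ≤ |f (xs n)| := le_abs_self _
        _ ≤ ‖f‖ * ‖xs n‖ := f.le_opNorm _
        _ = ‖xs n‖ := by rw [hf, one_mul]
      have hnorm : Tendsto (fun n => ‖xs n‖) atTop (𝓝 1) :=
        tendsto_of_tendsto_of_tendsto_of_le_of_le hfx tendsto_const_nhds hfle hxs
      have hev : ∀ᶠ n in atTop, xs n ≠ 0 := by
        filter_upwards [hfx.eventually (eventually_gt_nhds (by norm_num : (1:ℝ)/2 < 1))]
          with n hn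
        intro h0
        rw [h0] at hn; simp at hn; linarith
      set ys : ℕ → X := fun n => if xs n = 0 then x else ‖xs n‖⁻¹ • xs n with hys
      have hysn : ∀ n, ‖ys n‖ = 1 := by
        intro n
        by_cases h : xs n = 0
        · simp [hys, h, hxn]
        · have : ‖xs n‖ ≠ 0 := norm_ne_zero_iff.mpr h
          simp [hys, h, norm_smul, abs_of_nonneg (inv_nonneg.mpr (norm_nonneg _)),
            inv_mul_cancel₀ this]
      have hdiff : Tendsto (fun n => ‖ys n - xs n‖) atTop (𝓝 0) := by
        have h1 : Tendsto (fun n => |1 - ‖xs n‖|) atTop (𝓝 0) := by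
          have := (tendsto_const_nhds (x := (1:ℝ))).sub hnorm
          rw [sub_self] at this
          simpa using this.abs
        apply squeeze_zero_norm' ?_ h1
        filter_upwards [hev] with n hn
        have hpos : (0:ℝ) < ‖xs n‖ := norm_pos_iff.mpr hn
        have : ys n - xs n = (‖xs n‖⁻¹ - 1) • xs n := by
          simp [hys, hn, sub_smul]
        rw [norm_norm, this, norm_smul, Real.norm_eq_abs]
        have heq : |‖xs n‖⁻¹ - 1| * ‖xs n‖ = |(‖xs n‖⁻¹ - 1) * ‖xs n‖| := by
          rw [abs_mul, abs_of_pos hpos]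
        rw [heq, sub_mul, inv_mul_cancel₀ hpos.ne', one_mul]
      have hfys : Tendsto (fun n => f (ys n)) atTop (𝓝 1) := by
        have hg : Tendsto (fun n => ‖xs n‖⁻¹ * f (xs n)) atTop (𝓝 1) := by
          have := (hnorm.inv₀ one_ne_zero).mul hfx
          simpa using this
        apply hg.congr'
        filter_upwards [hev] with n hn
        simp [hys, hn]
      have hsum : Tendsto (fun n => ‖ys n + x‖) atTop (𝓝 2) := by
        have hlow : Tendsto (fun n => f (ys n) + 1) atTop (𝓝 2) := by
          have := hfys.add (tendsto_const_nhds (x := (1:ℝ)))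
          norm_num at this; exact this
        refine tendsto_of_tendsto_of_tendsto_of_le_of_le hlow tendsto_const_nhds
          (fun n => ?_) (fun n => ?_)
        · calc f (ys n) + 1 = f (ys n + x) := by rw [map_add, hx.2]
          _ ≤ |f (ys n + x)| := le_abs_self _
          _ ≤ ‖f‖ * ‖ys n + x‖ := f.le_opNorm _
          _ = ‖ys n + x‖ := by rw [hf, one_mul]
        · calc ‖ys n + x‖ ≤ ‖ys n‖ + ‖x‖ := norm_add_le _ _
          _ = 2 := by rw [hysn n, hxn]; norm_num
      have hd := H x hxn ys hysn hsum f hf hx.2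
      -- transfer to xs
      have key : ∀ n, infDist (xs n) (face X f) ≤
          infDist (ys n) (face X f) + ‖ys n - xs n‖ := by
        intro n
        have := Metric.infDist_le_infDist_add_dist (x := xs n) (y := ys n)
          (s := face X f)
        rwa [dist_comm, dist_eq_norm] at this
      have hup : Tendsto (fun n => infDist (ys n) (face X f) + ‖ys n - xs n‖)
          atTop (𝓝 0) := by
        have := hd.add hdiff; simpa using this
      exact tendsto_of_tendsto_of_tendsto_of_le_of_le tendsto_const_nhds hup
        (fun n => Metric.infDist_nonneg) key
  · rintro ⟨hS, hHS⟩ x hx xs hxs hsum f hf hfx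
    have hfxs := hS x hx xs hxs hsum f hf hfx
    exact hHS f hf ⟨x, le_of_eq hx, hfx⟩ xs (fun n => le_of_eq (hxs n)) hfxs
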